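/- Fix d ≥ 1, a nonzero vector μ ∈ ℝ^d, σ > 0, and p ∈ (1/2, 1). Let f(·; m, σ²I) denote the N(m, σ²I) density and let X be distributed as N(3μ, σ²I). Then Pr[f(X; μ, σ²I) ≥ p·f(X; −μ, σ²I) and f(X; μ, σ²I) ≥ (1−p)·f(X; 3μ, σ²I)] ≤ Φ(−‖μ‖/σ − σ·ln(1−p)/‖μ‖). -/

import Mathlib

open MeasureTheory Real Set ProbabilityTheory
open scoped ENNReal RealInnerProductSpace
open scoped NNReal

/-- The standard normal cumulative distribution function
`Φ(z) = ∫_{−∞}^z (1/√(2π)) e^{−u²/2} du`. -/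
noncomputable def stdNormCDF (z : ℝ) : ℝ :=
  ∫ u in Set.Iic z, (1 / Real.sqrt (2 * Real.pi)) * Real.exp (-u ^ 2 / 2)
/-- Density of the `d`-dimensional Gaussian `N(m, σ²I)`:
`f(x; m, σ²I) = (2πσ²)^{−d/2} exp(−‖x−m‖²/(2σ²))`. -/
noncomputable def gaussPdf (d : ℕ) (m : EuclideanSpace ℝ (Fin d)) (σ : ℝ)
    (x : EuclideanSpace ℝ (Fin d)) : ℝ :=
  (2 * Real.pi * σ ^ 2) ^ (-(d : ℝ) / 2) * Real.exp (-‖x - m‖ ^ 2 / (2 * σ ^ 2))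

/-- The `d`-dimensional Gaussian measure `N(m, σ²I)` on `ℝ^d`. -/
noncomputable def gauss (d : ℕ) (m : EuclideanSpace ℝ (Fin d)) (σ : ℝ) :
    Measure (EuclideanSpace ℝ (Fin d)) :=
  volume.withDensity fun x => ENNReal.ofReal (gaussPdf d m σ x)

lemma gaussPdf_factor (d : ℕ) (σ : ℝ) (hσ : 0 < σ)
    (b : OrthonormalBasis (Fin d) ℝ (EuclideanSpace ℝ (Fin d)))
    (m x : EuclideanSpace ℝ (Fin d)) :
    gaussPdf d m σ x
      = ∏ i, gaussianPDFReal (b.repr m i) ⟨σ^2, sq_nonneg σ⟩ (b.repr x i) := by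
  have hA : (0:ℝ) < 2 * π * σ ^ 2 := by positivity
  have hconst : (2 * π * σ ^ 2) ^ (-(d:ℝ)/2) = ((√(2 * π * σ ^ 2))⁻¹) ^ d := by
    rw [sqrt_eq_rpow, ← Real.rpow_neg_one,
      ← Real.rpow_natCast (((2 * π * σ ^ 2) ^ ((1:ℝ)/2)) ^ (-1:ℝ)) d,
      ← Real.rpow_mul hA.le, ← Real.rpow_mul hA.le]
    congr 1
    ring
  have hsum : ‖x - m‖ ^ 2 = ∑ i, (b.repr x i - b.repr m i) ^ 2 := by
    have h1 : ‖x - m‖ = ‖b.repr (x - m)‖ := (b.repr.norm_map _).symm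
    rw [h1, EuclideanSpace.norm_eq, Real.sq_sqrt (by positivity)]
    simp [map_sub, sq_abs]
  simp only [gaussianPDFReal, NNReal.coe_mk]
  rw [Finset.prod_mul_distrib, Finset.prod_const, ← Real.exp_sum, Finset.card_univ,
    Fintype.card_fin, gaussPdf, hconst, hsum]
  congr 1
  rw [← Finset.sum_div, ← Finset.sum_neg_distrib]
  rfl

lemma gaussPdf_nonneg (d : ℕ) (m : EuclideanSpace ℝ (Fin d)) (σ : ℝ)
    (x : EuclideanSpace ℝ (Fin d)) : 0 ≤ gaussPdf d m σ x := by
  unfold gaussPdf; positivity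

lemma int_Iic_gauss (a c σ : ℝ) (hσ : 0 < σ) :
    ∫ u in Set.Iic c, gaussianPDFReal a ⟨σ^2, sq_nonneg σ⟩ u = stdNormCDF ((c - a)/σ) := by
  set v : ℝ≥0 := ⟨σ^2, sq_nonneg σ⟩ with hv
  have hvc : (v : ℝ) = σ^2 := rfl
  have hvne : v ≠ 0 := by
    intro h
    exact (pow_ne_zero 2 hσ.ne') (by rw [← hvc, h, NNReal.coe_zero])
  have h1 : gaussianReal a v (Set.Iic c)
      = ENNReal.ofReal (∫ u in Set.Iic c, gaussianPDFReal a v u) :=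
    gaussianReal_apply_eq_integral a hvne _
  have hmap : (gaussianReal 0 1).map (fun x => σ * x + a) = gaussianReal a v := by
    have h2 : (gaussianReal 0 1).map (σ * ·) = gaussianReal 0 v := by
      rw [gaussianReal_map_const_mul σ]
      simp [hv]
      rfl
    rw [show (fun x => σ * x + a) = (· + a) ∘ (σ * ·) from rfl,
      ← Measure.map_map (measurable_add_const a) (measurable_const_mul σ), h2,
      gaussianReal_map_add_const a, zero_add]
  have h3 : gaussianReal a v (Set.Iic c) = gaussianReal 0 1 (Set.Iic ((c - a)/σ)) := by
    rw [← hmap, Measure.map_apply (((measurable_const_mul σ).add_const a)) measurableSet_Iic]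
    congr 1
    ext x
    simp only [Set.mem_preimage, Set.mem_Iic]
    rw [le_div_iff₀ hσ]
    constructor <;> intro h <;> nlinarith
  have h4 : gaussianReal 0 1 (Set.Iic ((c - a)/σ))
      = ENNReal.ofReal (stdNormCDF ((c - a)/σ)) := by
    rw [gaussianReal_apply_eq_integral 0 one_ne_zero]
    congr 1
    simp only [gaussianPDFReal, stdNormCDF, NNReal.coe_one, mul_one, sub_zero, one_div]
  have hnn1 : 0 ≤ ∫ u in Set.Iic c, gaussianPDFReal a v u :=
    integral_nonneg fun u => gaussianPDFReal_nonneg _ _ _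
  have hnn2 : 0 ≤ stdNormCDF ((c - a)/σ) :=
    integral_nonneg fun u => by positivity
  exact (ENNReal.ofReal_eq_ofReal_iff hnn1 hnn2).mp (h1.symm.trans (h3.trans h4))

lemma stdNormCDF_nonneg (z : ℝ) : 0 ≤ stdNormCDF z :=
  integral_nonneg fun u => by positivity

lemma gaussPdf_integrable (d : ℕ) (m : EuclideanSpace ℝ (Fin d)) (σ : ℝ) (hσ : 0 < σ) :
    Integrable (gaussPdf d m σ) := by
  have hbre : (0:ℝ) < (((2*σ^2)⁻¹ : ℝ) : ℂ).re := by
    simp only [Complex.ofReal_re]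
    positivity
  have h := GaussianFourier.integrable_cexp_neg_mul_sq_norm_add (V := EuclideanSpace ℝ (Fin d)) hbre 0 0
  have hbase : Integrable (fun x : EuclideanSpace ℝ (Fin d) => rexp (-(2*σ^2)⁻¹ * ‖x‖^2)) := by
    have := h.re
    refine this.congr (ae_of_all _ fun x => ?_)
    have hx : (-(((2*σ^2)⁻¹ : ℝ) : ℂ) * (‖x‖:ℂ)^2 + 0 * (⟪(0 : EuclideanSpace ℝ (Fin d)), x⟫ : ℂ))
        = ((-(2*σ^2)⁻¹ * ‖x‖^2 : ℝ) : ℂ) := by push_cast; ring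
    simp only [hx, RCLike.re_to_complex, ← Complex.ofReal_exp, Complex.ofReal_re]
  have heq : gaussPdf d m σ
      = fun x => (2 * π * σ ^ 2) ^ (-(d:ℝ)/2) * rexp (-(2*σ^2)⁻¹ * ‖x - m‖^2) := by
    funext x
    unfold gaussPdf
    congr 1
    rw [neg_div, div_eq_inv_mul, neg_mul]
  rw [heq]
  exact (hbase.comp_sub_right m).const_mul _

lemma gauss_halfspace (d : ℕ) (hd : 1 ≤ d) (μv : EuclideanSpace ℝ (Fin d)) (hμ : μv ≠ 0)
    (σ : ℝ) (hσ : 0 < σ) (t : ℝ) :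
    gauss d ((3 : ℝ) • μv) σ {x | ⟪μv, x⟫ ≤ t}
      = ENNReal.ofReal (stdNormCDF ((t / ‖μv‖ - 3 * ‖μv‖) / σ)) := by
  classical
  have hn : (0:ℝ) < ‖μv‖ := norm_pos_iff.mpr hμ
  set m : EuclideanSpace ℝ (Fin d) := (3:ℝ) • μv with hm
  set i0 : Fin d := ⟨0, hd⟩ with hi0
  have hw : ‖(‖μv‖⁻¹ • μv : EuclideanSpace ℝ (Fin d))‖ = 1 := by
    rw [norm_smul, norm_inv, norm_norm]
    field_simp
  have horth : Orthonormal ℝ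
      (Set.restrict {i0} (fun _ : Fin d => (‖μv‖⁻¹ • μv : EuclideanSpace ℝ (Fin d)))) := by
    constructor
    · intro i; exact hw
    · intro i j hij
      exact absurd (Subtype.ext ((Set.mem_singleton_iff.mp i.2).trans
        (Set.mem_singleton_iff.mp j.2).symm)) hij
  obtain ⟨b, hb⟩ := Orthonormal.exists_orthonormalBasis_extension_of_card_eq
    (𝕜 := ℝ) (by simp) horth
  have hb0 : b i0 = ‖μv‖⁻¹ • μv := hb i0 rfl
  have hinner : ∀ x : EuclideanSpace ℝ (Fin d), ⟪μv, x⟫ = ‖μv‖ * b.repr x i0 := by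
    intro x
    rw [OrthonormalBasis.repr_apply_apply, hb0, real_inner_smul_left]
    field_simp
  set Hs : Set (EuclideanSpace ℝ (Fin d)) := {x | ⟪μv, x⟫ ≤ t} with hHs
  have hHmeas : MeasurableSet Hs := by
    have hc : Continuous fun x : EuclideanSpace ℝ (Fin d) => ⟪μv, x⟫ :=
      continuous_const.inner continuous_id
    exact measurableSet_le hc.measurable measurable_const
  set v : ℝ≥0 := ⟨σ^2, sq_nonneg σ⟩ with hv
  have hvne : v ≠ 0 := by
    intro h
    exact (pow_ne_zero 2 hσ.ne') (by rw [show σ^2 = ((v:ℝ)) from rfl, h, NNReal.coe_zero])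
  set c : ℝ := t / ‖μv‖ with hc
  set g : Fin d → ℝ → ℝ := fun i =>
    if i = i0 then Set.indicator (Set.Iic c) (gaussianPDFReal (b.repr m i0) v)
    else gaussianPDFReal (b.repr m i) v with hg
  have key : ∀ y : EuclideanSpace ℝ (Fin d),
      Set.indicator Hs (gaussPdf d m σ) (b.repr.symm y) = ∏ i, g i (y i) := by
    intro y
    have hmem : b.repr.symm y ∈ Hs ↔ y i0 ≤ c := by
      rw [hHs, Set.mem_setOf_eq, hinner, LinearIsometryEquiv.apply_symm_apply, hc,
        le_div_iff₀ hn, mul_comm]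
    by_cases hy : y i0 ≤ c
    · rw [Set.indicator_of_mem (hmem.mpr hy), gaussPdf_factor d σ hσ b m _,
        LinearIsometryEquiv.apply_symm_apply]
      refine Finset.prod_congr rfl fun i _ => ?_
      by_cases hi : i = i0
      · subst hi
        simp only [hg, if_pos rfl]
        rw [Set.indicator_of_mem (show y i0 ∈ Set.Iic c from hy)]
      · simp only [hg, if_neg hi]
        rfl
    · rw [Set.indicator_of_notMem (fun hmm => hy (hmem.mp hmm))]
      symm
      apply Finset.prod_eq_zero (Finset.mem_univ i0)
      simp only [hg, if_pos rfl]
      rw [Set.indicator_of_notMem (show y i0 ∉ Set.Iic c from hy)]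
  have hrepr_m : b.repr m i0 = 3 * ‖μv‖ := by
    rw [OrthonormalBasis.repr_apply_apply, hb0, hm, real_inner_smul_left,
      real_inner_smul_right, real_inner_self_eq_norm_sq]
    field_simp
  have hI : ∫ x in Hs, gaussPdf d m σ x = stdNormCDF ((c - 3*‖μv‖)/σ) := by
    rw [← integral_indicator hHmeas,
      ← (b.measurePreserving_repr_symm).integral_comp
        b.repr.symm.toHomeomorph.measurableEmbedding (Set.indicator Hs (gaussPdf d m σ))]
    simp_rw [key]
    rw [← ((EuclideanSpace.volume_preserving_symm_measurableEquiv_toLp (Fin d)).symm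
        (MeasurableEquiv.toLp 2 (Fin d → ℝ)).symm).integral_comp
        (MeasurableEquiv.measurableEmbedding _) (fun y => ∏ i, g i (y i))]
    have : ∀ z : Fin d → ℝ,
        (∏ i, g i (((MeasurableEquiv.toLp 2 (Fin d → ℝ)).symm.symm z) i)) = ∏ i, g i (z i) :=
      fun z => rfl
    simp_rw [this]
    rw [MeasureTheory.volume_pi, MeasureTheory.integral_fintype_prod_eq_prod (ι := Fin d) g]
    rw [Finset.prod_eq_single i0]
    · simp only [hg, if_pos rfl]
      rw [integral_indicator measurableSet_Iic, int_Iic_gauss _ c σ hσ, hrepr_m]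
    · intro i _ hi
      simp only [hg, if_neg hi]
      exact integral_gaussianPDFReal_eq_one _ hvne
    · intro h
      exact absurd (Finset.mem_univ i0) h
  rw [gauss, withDensity_apply _ hHmeas,
    ← ofReal_integral_eq_lintegral_ofReal (gaussPdf_integrable d m σ hσ).integrableOn
      (ae_of_all _ fun x => gaussPdf_nonneg d m σ x), hI, hc]

/-- For `X ∼ N(3μ, σ²I)`, the probability that the MDA classifier assigns label
`+1` to `X` is at most `Φ(−‖μ‖/σ − σ ln(1−p)/‖μ‖)`. -/
theorem mda_err_neg_minor (d : ℕ) (hd : 1 ≤ d) (μv : EuclideanSpace ℝ (Fin d)) (hμ : μv ≠ 0)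
    (σ p : ℝ) (hσ : 0 < σ) (hp1 : 1 / 2 < p) (hp2 : p < 1) :
    ((gauss d ((3 : ℝ) • μv) σ) {x | p * gaussPdf d (-μv) σ x ≤ gaussPdf d μv σ x ∧
        (1 - p) * gaussPdf d ((3 : ℝ) • μv) σ x ≤ gaussPdf d μv σ x}).toReal ≤
      stdNormCDF (-‖μv‖ / σ - σ * Real.log (1 - p) / ‖μv‖) := by
  have hn : (0:ℝ) < ‖μv‖ := norm_pos_iff.mpr hμ
  have hpp : (0:ℝ) < 1 - p := by linarith
  have hlog : Real.log (1 - p) < 0 := Real.log_neg hpp (by linarith)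
  set t₂ : ℝ := 2 * ‖μv‖^2 - σ^2 * Real.log (1 - p) with ht₂
  have hsub : {x : EuclideanSpace ℝ (Fin d) |
        p * gaussPdf d (-μv) σ x ≤ gaussPdf d μv σ x ∧
        (1 - p) * gaussPdf d ((3 : ℝ) • μv) σ x ≤ gaussPdf d μv σ x}
      ⊆ {x : EuclideanSpace ℝ (Fin d) | ⟪μv, x⟫ ≤ t₂} := by
    intro x hx
    obtain ⟨-, h2⟩ := hx
    set C : ℝ := (2 * π * σ ^ 2) ^ (-(d : ℝ) / 2) with hC
    have hCpos : 0 < C := Real.rpow_pos_of_pos (by positivity) _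
    have h2σ : (0:ℝ) < 2 * σ^2 := by positivity
    unfold gaussPdf at h2
    rw [show (1-p) * ((2 * π * σ ^ 2) ^ (-(d : ℝ) / 2) * rexp (-‖x - (3:ℝ) • μv‖ ^ 2 / (2 * σ ^ 2)))
        = (2 * π * σ ^ 2) ^ (-(d : ℝ) / 2) * ((1-p) * rexp (-‖x - (3:ℝ) • μv‖ ^ 2 / (2 * σ ^ 2)))
      from by ring] at h2
    have h3 : (1-p) * rexp (-‖x - (3:ℝ) • μv‖ ^ 2 / (2 * σ ^ 2))
        ≤ rexp (-‖x - μv‖ ^ 2 / (2 * σ ^ 2)) :=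
      le_of_mul_le_mul_left h2 hCpos
    rw [← Real.exp_log hpp, ← Real.exp_add, Real.exp_le_exp] at h3
    have h6 := mul_le_mul_of_nonneg_right h3 h2σ.le
    rw [add_mul, div_mul_cancel₀ _ h2σ.ne', div_mul_cancel₀ _ h2σ.ne'] at h6
    have hxm : ‖x - (3:ℝ) • μv‖^2 = ‖x‖^2 - 6 * ⟪μv, x⟫ + 9 * ‖μv‖^2 := by
      rw [norm_sub_sq_real, real_inner_smul_right, norm_smul, real_inner_comm]
      simp [abs_of_nonneg]
      ring
    have hxμ : ‖x - μv‖^2 = ‖x‖^2 - 2 * ⟪μv, x⟫ + ‖μv‖^2 := by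
      rw [norm_sub_sq_real, real_inner_comm]
    rw [hxm, hxμ] at h6
    have h7 : σ^2 * Real.log (1-p) ≤ 0 :=
      mul_nonpos_of_nonneg_of_nonpos (sq_nonneg σ) hlog.le
    show ⟪μv, x⟫ ≤ t₂
    rw [ht₂]
    linarith
  have hHval := gauss_halfspace d hd μv hμ σ hσ t₂
  have hmono := measure_mono (μ := gauss d ((3 : ℝ) • μv) σ) hsub
  rw [hHval] at hmono
  have harg : (t₂ / ‖μv‖ - 3 * ‖μv‖) / σ = -‖μv‖ / σ - σ * Real.log (1-p) / ‖μv‖ := by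
    rw [ht₂]
    field_simp
    ring
  rw [← harg]
  calc ((gauss d ((3 : ℝ) • μv) σ) _).toReal
      ≤ (ENNReal.ofReal (stdNormCDF ((t₂ / ‖μv‖ - 3 * ‖μv‖) / σ))).toReal :=
        ENNReal.toReal_mono ENNReal.ofReal_ne_top hmono
    _ = stdNormCDF ((t₂ / ‖μv‖ - 3 * ‖μv‖) / σ) :=
        ENNReal.toReal_ofReal (stdNormCDF_nonneg _)
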